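/- Stochastic primal–dual decomposition up to a stopping time: in the stochastic online resource allocation model, let (F_t)_{t=0}^{T} be a filtration such that γ_t is F_t-measurable and independent of F_{t−1} for every t. Let (μ_t)_{t=1}^{T} be a process with values in {μ ∈ ℝ^m : μ ≥ 0 componentwise} such that μ_t is F_{t−1}-measurable, and let (x_t)_{t=1}^{T} be such that x_t is F_t-measurable, x_t ∈ X_t, and r_t(x_t) − μ_t·g_t(x_t) = sup_{x ∈ X_t} ( r_t(x) − μ_t·g_t(x) ) almost surely. Let τ be a stopping time with respect to (F_t) taking values in {1,…,T}, and assume all quantities below are integrable. Then, with μ̄_τ = (1/τ)·Σ_{t=1}^{τ} μ_t, it holds that E[ Σ_{t=1}^{τ} r_t(x_t) ] ≥ E[ τ·D̄(μ̄_τ | P) ] − E[ Σ_{t=1}^{τ} μ_t·(ρ − g_t(x_t)) ]. -/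

import Mathlib

open MeasureTheory Finset

open ProbabilityTheory in
lemma freeze_aux {Ω α S : Type*} [MeasurableSpace Ω] [MeasurableSpace α] [MeasurableSpace S]
    (P : Measure Ω) [IsProbabilityMeasure P] (Pd : Measure S) [IsProbabilityMeasure Pd]
    (W : Ω → α) (γ : Ω → S) (hW : Measurable W) (hγ : Measurable γ)
    (hind : IndepFun W γ P) (hlaw : Measure.map γ P = Pd)
    (Φ : α × S → ℝ) (hΦ : Measurable Φ) (C : ℝ) (hbd : ∀ p, ‖Φ p‖ ≤ C) :
    ∫ ω, Φ (W ω, γ ω) ∂P = ∫ ω, (∫ s, Φ (W ω, s) ∂Pd) ∂P := by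
  have hmap : Measure.map (fun ω => (W ω, γ ω)) P = (Measure.map W P).prod Pd := by
    rw [← hlaw]
    exact (indepFun_iff_map_prod_eq_prod_map_map hW.aemeasurable hγ.aemeasurable).mp hind
  have hWP : IsProbabilityMeasure (Measure.map W P) := Measure.isProbabilityMeasure_map hW.aemeasurable
  have hint : Integrable Φ ((Measure.map W P).prod Pd) :=
    Integrable.mono' (integrable_const C) hΦ.aestronglyMeasurable (Filter.Eventually.of_forall hbd)
  calc ∫ ω, Φ (W ω, γ ω) ∂P
      = ∫ p, Φ p ∂(Measure.map (fun ω => (W ω, γ ω)) P) :=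
        (integral_map (hW.prodMk hγ).aemeasurable hΦ.aestronglyMeasurable).symm
    _ = ∫ p, Φ p ∂((Measure.map W P).prod Pd) := by rw [hmap]
    _ = ∫ a, ∫ s, Φ (a, s) ∂Pd ∂(Measure.map W P) := integral_prod Φ hint
    _ = ∫ ω, ∫ s, Φ (W ω, s) ∂Pd ∂P :=
        integral_map hW.aemeasurable
          (hΦ.stronglyMeasurable.integral_prod_right').aestronglyMeasurable

set_option maxHeartbeats 1000000 in
/-- Stochastic primal–dual decomposition up to a stopping time. -/
theorem stmt16
    {Ω S : Type*} [MeasurableSpace S] [m0 : MeasurableSpace Ω]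
    (P : Measure Ω) [IsProbabilityMeasure P]
    (T m d : ℕ) (hT : 0 < T) (hm : 0 < m)
    (ρ : Fin m → ℝ) (hρ : ∀ j, 0 < ρ j)
    (rbar : ℝ) (hrbar : 0 ≤ rbar)
    (X : S → Set (Fin d → ℝ))
    (r : S → (Fin d → ℝ) → ℝ)
    (g : S → (Fin d → ℝ) → (Fin m → ℝ))
    (hX0 : ∀ s, (0 : Fin d → ℝ) ∈ X s)
    (hr0 : ∀ s, r s 0 = 0)
    (hrpos : ∀ s, ∀ x ∈ X s, 0 ≤ r s x)
    (hrbd : ∀ s, ∀ x ∈ X s, r s x ≤ rbar)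
    (hg0 : ∀ s, g s 0 = 0)
    (hgpos : ∀ s, ∀ x ∈ X s, ∀ j, 0 ≤ g s x j)
    (ℱ : Filtration ℕ m0)
    (γ : ℕ → Ω → S)
    (hγmeas : ∀ t, 1 ≤ t → t ≤ T → Measurable[ℱ t] (γ t))
    (hγindep : ∀ t, 1 ≤ t → t ≤ T →
      ProbabilityTheory.Indep (MeasurableSpace.comap (γ t) inferInstance) (ℱ (t - 1)) P)
    (Pdist : Measure S) [IsProbabilityMeasure Pdist]
    (hlaw : ∀ t, 1 ≤ t → t ≤ T → Measure.map (γ t) P = Pdist)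
    (rstar : (Fin m → ℝ) → S → ℝ)
    (hrstar : ∀ ν s, rstar ν s =
      sSup { v | ∃ x ∈ X s, v = r s x - ∑ j, ν j * g s x j })
    (hrstarint : ∀ ν : Fin m → ℝ, (∀ j, 0 ≤ ν j) → Integrable (rstar ν) Pdist)
    (Dbar : (Fin m → ℝ) → ℝ)
    (hDbar : ∀ ν, Dbar ν = (∫ s, rstar ν s ∂Pdist) + ∑ j, ν j * ρ j)
    (hDconvex : ConvexOn ℝ { ν : Fin m → ℝ | ∀ j, 0 ≤ ν j } Dbar)
    (μ : ℕ → Ω → Fin m → ℝ)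
    (hμpos : ∀ t ω j, 0 ≤ μ t ω j)
    (hμmeas : ∀ t, 1 ≤ t → t ≤ T → Measurable[ℱ (t - 1)] (μ t))
    (x : ℕ → Ω → Fin d → ℝ)
    (hxmeas : ∀ t, 1 ≤ t → t ≤ T → Measurable[ℱ t] (x t))
    (hgreedy : ∀ t, 1 ≤ t → t ≤ T → ∀ᵐ ω ∂P, x t ω ∈ X (γ t ω) ∧
      r (γ t ω) (x t ω) - (∑ j, μ t ω j * g (γ t ω) (x t ω) j) =
        rstar (μ t ω) (γ t ω))
    (τ : Ω → ℕ) (hτ : IsStoppingTime ℱ (fun ω => (τ ω : WithTop ℕ)))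
    (hτrange : ∀ ω, 1 ≤ τ ω ∧ τ ω ≤ T)
    (hint1 : Integrable (fun ω => ∑ t ∈ Finset.Icc 1 (τ ω), r (γ t ω) (x t ω)) P)
    (hint2 : Integrable (fun ω => (τ ω : ℝ) *
      Dbar (fun j => (∑ t ∈ Finset.Icc 1 (τ ω), μ t ω j) / (τ ω : ℝ))) P)
    (hint3 : Integrable (fun ω =>
      ∑ t ∈ Finset.Icc 1 (τ ω), ∑ j, μ t ω j * (ρ j - g (γ t ω) (x t ω) j)) P) :
    ∫ ω, (∑ t ∈ Finset.Icc 1 (τ ω), r (γ t ω) (x t ω)) ∂P ≥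
      (∫ ω, (τ ω : ℝ) *
        Dbar (fun j => (∑ t ∈ Finset.Icc 1 (τ ω), μ t ω j) / (τ ω : ℝ)) ∂P) -
      ∫ ω, (∑ t ∈ Finset.Icc 1 (τ ω), ∑ j, μ t ω j * (ρ j - g (γ t ω) (x t ω) j)) ∂P := by
  classical
  have hτ1 : ∀ ω, 1 ≤ τ ω := fun ω => (hτrange ω).1
  have hτT : ∀ ω, τ ω ≤ T := fun ω => (hτrange ω).2
  have hτpos : ∀ ω, (0:ℝ) < (τ ω : ℝ) := fun ω => by exact_mod_cast (hτ1 ω)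
  have hτle : ∀ n : ℕ, MeasurableSet[ℱ n] {ω | τ ω ≤ n} := fun n => by
    have h := hτ.measurableSet_le n
    convert h using 1
    ext ω
    simp
  -- basic facts about the sets defining rstar
  have hV0 : ∀ (ν : Fin m → ℝ) s, (0:ℝ) ∈ {v | ∃ x' ∈ X s, v = r s x' - ∑ j, ν j * g s x' j} :=
    fun ν s => ⟨0, hX0 s, by simp [hr0 s, hg0 s]⟩
  have hVbdd : ∀ (ν : Fin m → ℝ), (∀ j, 0 ≤ ν j) → ∀ s,
      rbar ∈ upperBounds {v | ∃ x' ∈ X s, v = r s x' - ∑ j, ν j * g s x' j} := by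
    rintro ν hν s v ⟨x', hx', rfl⟩
    have h1 := hrbd s x' hx'
    have h2 : 0 ≤ ∑ j, ν j * g s x' j :=
      Finset.sum_nonneg fun j _ => mul_nonneg (hν j) (hgpos s x' hx' j)
    linarith
  have hrstar_nonneg : ∀ (ν : Fin m → ℝ), (∀ j, 0 ≤ ν j) → ∀ s, 0 ≤ rstar ν s := by
    intro ν hν s; rw [hrstar]; exact le_csSup ⟨rbar, hVbdd ν hν s⟩ (hV0 ν s)
  have hrstar_le : ∀ (ν : Fin m → ℝ), (∀ j, 0 ≤ ν j) → ∀ s, rstar ν s ≤ rbar := by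
    intro ν hν s; rw [hrstar]; exact csSup_le ⟨0, hV0 ν s⟩ fun v hv => hVbdd ν hν s hv
  have hrstar_anti : ∀ (ν ν' : Fin m → ℝ), (∀ j, 0 ≤ ν j) → (∀ j, ν j ≤ ν' j) → ∀ s,
      rstar ν' s ≤ rstar ν s := by
    intro ν ν' hν hle s
    rw [hrstar ν' s, hrstar ν s]
    refine csSup_le ⟨0, hV0 ν' s⟩ ?_
    rintro v ⟨x', hx', rfl⟩
    refine le_trans ?_ (le_csSup ⟨rbar, hVbdd ν hν s⟩ ⟨x', hx', rfl⟩)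
    have h : ∑ j, ν j * g s x' j ≤ ∑ j, ν' j * g s x' j :=
      Finset.sum_le_sum fun j _ => mul_le_mul_of_nonneg_right (hle j) (hgpos s x' hx' j)
    linarith

  -- rational grid approximations from above
  set δ : ℕ → (Fin m → ℝ) → (Fin m → ℚ) :=
    fun k ν j => ((⌊ν j * ((k:ℝ)+1)⌋ + 1 : ℤ) : ℚ) / ((k:ℚ)+1) with hδdef
  have hδpos : ∀ (k) (ν : Fin m → ℝ), (∀ j, 0 ≤ ν j) → ∀ j, 0 ≤ δ k ν j := by
    intro k ν hν j
    simp only [hδdef]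
    apply div_nonneg
    · have h : (0:ℤ) ≤ ⌊ν j * ((k:ℝ)+1)⌋ + 1 := by
        have := Int.floor_nonneg.mpr (mul_nonneg (hν j) (by positivity : (0:ℝ) ≤ (k:ℝ)+1))
        omega
      exact_mod_cast h
    · positivity
  have hδgtR : ∀ (k) (ν : Fin m → ℝ) j, ν j ≤ ((δ k ν j : ℚ) : ℝ) := by
    intro k ν j
    simp only [hδdef]
    push_cast
    rw [le_div_iff₀ (by positivity : (0:ℝ) < (k:ℝ)+1)]
    have := Int.lt_floor_add_one (ν j * ((k:ℝ)+1))
    linarith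
  have hδleR : ∀ (k) (ν : Fin m → ℝ) j, ((δ k ν j : ℚ) : ℝ) ≤ ν j + 1/((k:ℝ)+1) := by
    intro k ν j
    simp only [hδdef]
    push_cast
    rw [div_le_iff₀ (by positivity : (0:ℝ) < (k:ℝ)+1)]
    have h := Int.floor_le (ν j * ((k:ℝ)+1))
    have hk : (0:ℝ) < (k:ℝ)+1 := by positivity
    have : (ν j + 1/((k:ℝ)+1)) * ((k:ℝ)+1) = ν j * ((k:ℝ)+1) + 1 := by
      field_simp
    linarith
  -- measurable modifications of rstar at rational points
  have hex : ∀ q : Fin m → ℚ, ∃ G : S → ℝ, Measurable G ∧ (∀ s, 0 ≤ G s ∧ G s ≤ rbar) ∧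
      ((∀ j, 0 ≤ q j) → ∀ᵐ s ∂Pdist, G s = rstar (fun j => (q j : ℝ)) s) := by
    intro q
    by_cases hq : ∀ j, 0 ≤ q j
    · have hq' : ∀ j, (0:ℝ) ≤ ((fun j => (q j : ℝ)) j) := fun j => by
        simp only []; exact_mod_cast hq j
      have hi := (hrstarint _ hq').aestronglyMeasurable
      refine ⟨fun s => max 0 (min (hi.mk _ s) rbar), ?_, ?_, ?_⟩
      · exact measurable_const.max (hi.stronglyMeasurable_mk.measurable.min measurable_const)
      · intro s
        exact ⟨le_max_left _ _, max_le hrbar (min_le_right _ _)⟩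
      · intro _
        refine hi.ae_eq_mk.mono fun s hs => ?_
        simp only [← hs]
        rw [inf_eq_left.mpr (hrstar_le _ hq' s), sup_eq_right.mpr (hrstar_nonneg _ hq' s)]
    · exact ⟨fun _ => 0, measurable_const, fun s => ⟨le_refl _, hrbar⟩, fun h => absurd h hq⟩
  choose gq hgqm hgqbd hgqae using hex
  have hE : ∀ᵐ s ∂Pdist, ∀ q : Fin m → ℚ, (∀ j, 0 ≤ q j) →
      gq q s = rstar (fun j => (q j : ℝ)) s := by
    rw [ae_all_iff]
    intro q
    by_cases hq : ∀ j, 0 ≤ q j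
    · exact (hgqae q hq).mono fun s h _ => h
    · exact Filter.Eventually.of_forall fun s h => absurd h hq
  -- the jointly measurable modification
  set φ : (Fin m → ℝ) → S → ℝ := fun ν s => ⨆ k : ℕ, gq (δ k ν) s with hφdef
  have hφbdd : ∀ (ν : Fin m → ℝ) s, BddAbove (Set.range fun k : ℕ => gq (δ k ν) s) :=
    fun ν s => ⟨rbar, by rintro v ⟨k, rfl⟩; exact (hgqbd _ s).2⟩
  have hφ_nonneg : ∀ (ν : Fin m → ℝ) s, 0 ≤ φ ν s := fun ν s =>
    le_trans (hgqbd (δ 0 ν) s).1 (le_ciSup (hφbdd ν s) 0)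
  have hφ_le : ∀ (ν : Fin m → ℝ) s, φ ν s ≤ rbar := fun ν s => ciSup_le fun k => (hgqbd _ s).2
  have hφ_eq : ∀ s, (∀ q : Fin m → ℚ, (∀ j, 0 ≤ q j) → gq q s = rstar (fun j => (q j : ℝ)) s) →
      ∀ ν : Fin m → ℝ, (∀ j, 0 ≤ ν j) → φ ν s = rstar ν s := by
    intro s hs ν hν
    have hterm : ∀ k, gq (δ k ν) s = rstar (fun j => ((δ k ν j : ℚ) : ℝ)) s :=
      fun k => hs _ (hδpos k ν hν)
    have hup : φ ν s ≤ rstar ν s := by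
      refine ciSup_le fun k => ?_
      rw [hterm k]
      exact hrstar_anti ν _ hν (fun j => hδgtR k ν j) s
    have hdown : rstar ν s ≤ φ ν s := by
      refine le_of_forall_sub_le fun ε hε => ?_
      have hne : {v | ∃ x' ∈ X s, v = r s x' - ∑ j, ν j * g s x' j}.Nonempty := ⟨0, hV0 ν s⟩
      have hlt : rstar ν s - ε/2 < sSup {v | ∃ x' ∈ X s, v = r s x' - ∑ j, ν j * g s x' j} := by
        rw [← hrstar]; linarith
      obtain ⟨v, hvmem, hv⟩ := exists_lt_of_lt_csSup hne hlt
      obtain ⟨x', hx', rfl⟩ := hvmem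
      have hG0 : 0 ≤ ∑ j, g s x' j := Finset.sum_nonneg fun j _ => hgpos s x' hx' j
      obtain ⟨k, hk⟩ := exists_nat_gt ((∑ j, g s x' j) / (ε/2))
      have hkpos : (0:ℝ) < (k:ℝ) + 1 := by positivity
      have hGk : (∑ j, g s x' j) / ((k:ℝ)+1) ≤ ε/2 := by
        rw [div_le_iff₀ hkpos]
        have h2 : (∑ j, g s x' j) / (ε/2) < (k:ℝ)+1 := lt_trans hk (by linarith)
        rw [div_lt_iff₀ (by linarith : (0:ℝ) < ε/2)] at h2
        linarith
      have hstep : (r s x' - ∑ j, ν j * g s x' j) - ε/2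
          ≤ rstar (fun j => ((δ k ν j : ℚ) : ℝ)) s := by
        have hmem : (r s x' - ∑ j, ((δ k ν j : ℚ):ℝ) * g s x' j)
            ∈ {v | ∃ x'' ∈ X s, v = r s x'' - ∑ j, ((δ k ν j : ℚ):ℝ) * g s x'' j} :=
          ⟨x', hx', rfl⟩
        have hb := le_csSup ⟨rbar, hVbdd _ (fun j => le_trans (hν j) (hδgtR k ν j)) s⟩ hmem
        rw [← hrstar] at hb
        have hsum' : ∑ j, ((δ k ν j : ℚ):ℝ) * g s x' j
            ≤ (∑ j, ν j * g s x' j) + (∑ j, g s x' j)/((k:ℝ)+1) := by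
          rw [Finset.sum_div, ← Finset.sum_add_distrib]
          refine Finset.sum_le_sum fun j _ => ?_
          have h1 := hδleR k ν j
          have h2 := hgpos s x' hx' j
          calc ((δ k ν j : ℚ):ℝ) * g s x' j ≤ (ν j + 1/((k:ℝ)+1)) * g s x' j :=
              mul_le_mul_of_nonneg_right h1 h2
            _ = ν j * g s x' j + g s x' j / ((k:ℝ)+1) := by ring
        linarith
      have hφk : rstar (fun j => ((δ k ν j : ℚ) : ℝ)) s ≤ φ ν s := by
        rw [← hterm k]
        exact le_ciSup (hφbdd ν s) k
      linarith
    linarith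

  -- joint measurability
  have hδm : ∀ k, Measurable (δ k) := by
    intro k
    apply measurable_pi_lambda
    intro j
    have h1 : Measurable fun ν : Fin m → ℝ => ⌊ν j * ((k:ℝ)+1)⌋ :=
      ((measurable_pi_apply j).mul_const _).floor
    exact (measurable_from_top (f := fun z : ℤ => ((z + 1 : ℤ) : ℚ) / ((k:ℚ)+1))).comp h1
  have hgq_unc : Measurable fun p : S × (Fin m → ℚ) => gq p.2 p.1 :=
    measurable_from_prod_countable_left fun q => hgqm q
  have hφm : Measurable fun p : (Fin m → ℝ) × S => φ p.1 p.2 := by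
    simp only [hφdef]
    exact Measurable.iSup fun k =>
      hgq_unc.comp (measurable_snd.prodMk ((hδm k).comp measurable_fst))
  -- H and its properties
  set H : (Fin m → ℝ) → ℝ := fun ν => ∫ s, φ ν s ∂Pdist with hHdef
  have hHm : StronglyMeasurable H := hφm.stronglyMeasurable.integral_prod_right'
  have hφint : ∀ ν : Fin m → ℝ, Integrable (φ ν) Pdist := fun ν =>
    Integrable.mono' (integrable_const rbar)
      (hφm.comp (measurable_const.prodMk measurable_id)).aestronglyMeasurable
      (Filter.Eventually.of_forall fun s => by
        rw [Real.norm_eq_abs, abs_of_nonneg (hφ_nonneg ν s)]; exact hφ_le ν s)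
  have hH_nonneg : ∀ ν : Fin m → ℝ, 0 ≤ H ν := fun ν =>
    integral_nonneg fun s => hφ_nonneg ν s
  have hH_le : ∀ ν : Fin m → ℝ, H ν ≤ rbar := fun ν => by
    calc H ν ≤ ∫ _, rbar ∂Pdist := integral_mono (hφint ν) (integrable_const _) (hφ_le ν)
    _ = rbar := by simp
  have hHeq : ∀ ν : Fin m → ℝ, (∀ j, 0 ≤ ν j) → (∫ s, rstar ν s ∂Pdist) = H ν := by
    intro ν hν
    exact integral_congr_ae (hE.mono fun s hs => (hφ_eq s hs ν hν).symm)

  -- the stopping-time indicator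
  set B : ℕ → Ω → ℝ := fun t ω => if t ≤ τ ω then 1 else 0 with hBdef
  have hτm : Measurable τ := by
    apply measurable_to_countable'
    intro n
    cases n with
    | zero =>
      have h1 : MeasurableSet {ω | τ ω ≤ 0} := ℱ.le 0 _ (hτle 0)
      have : τ ⁻¹' {0} = {ω | τ ω ≤ 0} := by ext ω; simp
      rw [this]; exact h1
    | succ k =>
      have h1 : MeasurableSet {ω | τ ω ≤ k + 1} := ℱ.le (k+1) _ (hτle (k+1))
      have h2 : MeasurableSet {ω | τ ω ≤ k} := ℱ.le k _ (hτle k)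
      have : τ ⁻¹' {k+1} = {ω | τ ω ≤ k + 1} \ {ω | τ ω ≤ k} := by
        ext ω; simp [Set.mem_diff]; omega
      rw [this]; exact h1.diff h2
  have hBmeasF : ∀ t, 1 ≤ t → Measurable[ℱ (t-1)] (B t) := by
    intro t ht
    have h1 : MeasurableSet[ℱ (t-1)] {ω | τ ω ≤ t-1} := hτle (t-1)
    have h2 : MeasurableSet[ℱ (t-1)] {ω | t ≤ τ ω} := by
      have he : {ω | t ≤ τ ω} = {ω | τ ω ≤ t-1}ᶜ := by
        ext ω; simp only [Set.mem_setOf_eq, Set.mem_compl_iff, not_le]; omega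
      rw [he]; exact h1.compl
    simp only [hBdef]
    exact Measurable.ite h2 measurable_const measurable_const
  have hBm : ∀ t, 1 ≤ t → Measurable (B t) := fun t ht => (hBmeasF t ht).mono (ℱ.le _) le_rfl
  have hB01 : ∀ t ω, B t ω = 0 ∨ B t ω = 1 := by
    intro t ω; simp only [hBdef]; by_cases h : t ≤ τ ω <;> simp [h]
  have hsum : ∀ (F : ℕ → Ω → ℝ) (ω : Ω),
      (∑ t ∈ Finset.Icc 1 (τ ω), F t ω) = ∑ t ∈ Finset.Icc 1 T, B t ω * F t ω := by
    intro F ω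
    have hIcc : Finset.Icc 1 (τ ω) = (Finset.Icc 1 T).filter (fun t => t ≤ τ ω) := by
      ext t
      simp only [Finset.mem_Icc, Finset.mem_filter]
      have := hτT ω; omega
    rw [hIcc, Finset.sum_filter]
    refine Finset.sum_congr rfl fun t _ => ?_
    by_cases h : t ≤ τ ω <;> simp [hBdef, h]
  have hμm : ∀ t, 1 ≤ t → t ≤ T → Measurable (μ t) :=
    fun t h1 h2 => (hμmeas t h1 h2).mono (ℱ.le _) le_rfl
  have hγm : ∀ t, 1 ≤ t → t ≤ T → Measurable (γ t) :=
    fun t h1 h2 => (hγmeas t h1 h2).mono (ℱ.le _) le_rfl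
  -- a.e. identification of φ with rstar along the arrivals
  have hγgoodt : ∀ t, 1 ≤ t → t ≤ T →
      ∀ᵐ ω ∂P, φ (μ t ω) (γ t ω) = rstar (μ t ω) (γ t ω) := by
    intro t ht1 ht2
    have hmapae : ∀ᵐ ω ∂P, ∀ q : Fin m → ℚ, (∀ j, 0 ≤ q j) →
        gq q (γ t ω) = rstar (fun j => (q j : ℝ)) (γ t ω) :=
      ae_of_ae_map (p := fun s => ∀ q : Fin m → ℚ, (∀ j, 0 ≤ q j) →
          gq q s = rstar (fun j => (q j : ℝ)) s)
        (hγm t ht1 ht2).aemeasurable (by rw [hlaw t ht1 ht2]; exact hE)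
    exact hmapae.mono fun ω hω => hφ_eq (γ t ω) hω (μ t ω) (hμpos t ω)
  clear_value δ φ H B
  -- the key per-period identity via freezing
  have hkey : ∀ t, 1 ≤ t → t ≤ T →
      (∫ ω, B t ω * rstar (μ t ω) (γ t ω) ∂P) = ∫ ω, B t ω * H (μ t ω) ∂P := by
    intro t ht1 ht2
    have hWF : Measurable[ℱ (t-1)] (fun ω => (B t ω, μ t ω)) :=
      (hBmeasF t ht1).prodMk (hμmeas t ht1 ht2)
    have hWm : Measurable (fun ω => (B t ω, μ t ω)) := hWF.mono (ℱ.le _) le_rfl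
    have hind : ProbabilityTheory.IndepFun (fun ω => (B t ω, μ t ω)) (γ t) P :=
      (ProbabilityTheory.IndepFun_iff_Indep _ (γ t) P).mpr
        (ProbabilityTheory.indep_of_indep_of_le_right (hγindep t ht1 ht2) hWF.comap_le).symm
    have hΦm : Measurable (fun p : (ℝ × (Fin m → ℝ)) × S =>
        (max 0 (min p.1.1 1)) * φ p.1.2 p.2) := by
      apply Measurable.mul
      · exact measurable_const.max ((measurable_fst.comp measurable_fst).min measurable_const)
      · exact hφm.comp ((measurable_snd.comp measurable_fst).prodMk measurable_snd)
    have hΦbd : ∀ p : (ℝ × (Fin m → ℝ)) × S,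
        ‖(max 0 (min p.1.1 1)) * φ p.1.2 p.2‖ ≤ rbar := by
      intro p
      rw [Real.norm_eq_abs, abs_mul]
      have h1 : |max 0 (min p.1.1 1)| ≤ 1 := by
        rw [abs_of_nonneg (le_max_left _ _)]
        exact max_le zero_le_one (min_le_right _ _)
      have h2 : |φ p.1.2 p.2| ≤ rbar := by
        rw [abs_of_nonneg (hφ_nonneg _ _)]; exact hφ_le _ _
      calc |max 0 (min p.1.1 1)| * |φ p.1.2 p.2| ≤ 1 * rbar :=
          mul_le_mul h1 h2 (abs_nonneg _) zero_le_one
        _ = rbar := one_mul _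
    have hfr := freeze_aux P Pdist (fun ω => (B t ω, μ t ω)) (γ t) hWm (hγm t ht1 ht2)
      hind (hlaw t ht1 ht2) _ hΦm rbar hΦbd
    have hcl : ∀ ω, max 0 (min (B t ω) 1) = B t ω := by
      intro ω; rcases hB01 t ω with h | h <;> rw [h] <;> norm_num
    have hL : ∫ ω, B t ω * rstar (μ t ω) (γ t ω) ∂P
        = ∫ ω, (max 0 (min (B t ω) 1)) * φ (μ t ω) (γ t ω) ∂P := by
      refine integral_congr_ae ((hγgoodt t ht1 ht2).mono fun ω hω => ?_)
      simp only [hω, hcl ω]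
    have hR : ∀ ω, (∫ s, (max 0 (min (B t ω) 1)) * φ (μ t ω) s ∂Pdist) = B t ω * H (μ t ω) := by
      intro ω
      simp only [hHdef]
      rw [hcl ω, integral_const_mul]
    rw [hL]
    rw [hfr]
    exact integral_congr_ae (Filter.Eventually.of_forall hR)

  -- integrability of the summands
  have hRint : ∀ t, 1 ≤ t → t ≤ T →
      Integrable (fun ω => B t ω * rstar (μ t ω) (γ t ω)) P := by
    intro t ht1 ht2
    have hmeas : Measurable fun ω => B t ω * φ (μ t ω) (γ t ω) :=
      (hBm t ht1).mul (hφm.comp ((hμm t ht1 ht2).prodMk (hγm t ht1 ht2)))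
    have hae : AEStronglyMeasurable (fun ω => B t ω * rstar (μ t ω) (γ t ω)) P :=
      hmeas.aestronglyMeasurable.congr ((hγgoodt t ht1 ht2).mono fun ω h => by simp only [h])
    refine Integrable.mono' (integrable_const rbar) hae (Filter.Eventually.of_forall fun ω => ?_)
    rw [Real.norm_eq_abs, abs_mul]
    have h1 : |B t ω| ≤ 1 := by rcases hB01 t ω with h | h <;> rw [h] <;> norm_num
    have h2 : |rstar (μ t ω) (γ t ω)| ≤ rbar := by
      rw [abs_of_nonneg (hrstar_nonneg _ (hμpos t ω) _)]
      exact hrstar_le _ (hμpos t ω) _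
    calc |B t ω| * |rstar (μ t ω) (γ t ω)| ≤ 1 * rbar :=
        mul_le_mul h1 h2 (abs_nonneg _) zero_le_one
      _ = rbar := one_mul _
  have hKint : ∀ t, 1 ≤ t → t ≤ T → Integrable (fun ω => B t ω * H (μ t ω)) P := by
    intro t ht1 ht2
    have hae : AEStronglyMeasurable (fun ω => B t ω * H (μ t ω)) P :=
      (hBm t ht1).aestronglyMeasurable.mul
        (hHm.comp_measurable (hμm t ht1 ht2)).aestronglyMeasurable
    refine Integrable.mono' (integrable_const rbar) hae (Filter.Eventually.of_forall fun ω => ?_)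
    rw [Real.norm_eq_abs, abs_mul]
    have h1 : |B t ω| ≤ 1 := by rcases hB01 t ω with h | h <;> rw [h] <;> norm_num
    have h2 : |H (μ t ω)| ≤ rbar := by
      rw [abs_of_nonneg (hH_nonneg _)]; exact hH_le _
    calc |B t ω| * |H (μ t ω)| ≤ 1 * rbar := mul_le_mul h1 h2 (abs_nonneg _) zero_le_one
      _ = rbar := one_mul _
  have hRf_int : Integrable (fun ω => ∑ t ∈ Finset.Icc 1 T, B t ω * rstar (μ t ω) (γ t ω)) P :=
    integrable_finset_sum _ fun t ht =>
      hRint t (Finset.mem_Icc.mp ht).1 (Finset.mem_Icc.mp ht).2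
  have hKf_int : Integrable (fun ω => ∑ t ∈ Finset.Icc 1 T, B t ω * H (μ t ω)) P :=
    integrable_finset_sum _ fun t ht =>
      hKint t (Finset.mem_Icc.mp ht).1 (Finset.mem_Icc.mp ht).2
  -- the averaged multiplier
  have hnubpos : ∀ ω j, 0 ≤ (∑ t ∈ Finset.Icc 1 (τ ω), μ t ω j) / (τ ω : ℝ) := fun ω j =>
    div_nonneg (Finset.sum_nonneg fun t _ => hμpos t ω j) (le_of_lt (hτpos ω))
  have hnubm : Measurable fun ω => (fun j => (∑ t ∈ Finset.Icc 1 (τ ω), μ t ω j) / (τ ω : ℝ)) := by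
    apply measurable_pi_lambda
    intro j
    apply Measurable.div
    · have he : (fun ω => ∑ t ∈ Finset.Icc 1 (τ ω), μ t ω j)
          = fun ω => ∑ t ∈ Finset.Icc 1 T, B t ω * μ t ω j :=
        funext fun ω => hsum (fun t ω => μ t ω j) ω
      rw [he]
      exact Finset.measurable_sum _ fun t ht =>
        (hBm t (Finset.mem_Icc.mp ht).1).mul
          ((measurable_pi_apply j).comp
            (hμm t (Finset.mem_Icc.mp ht).1 (Finset.mem_Icc.mp ht).2))
    · exact (measurable_from_top (f := (Nat.cast : ℕ → ℝ))).comp hτm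
  have hτHint : Integrable (fun ω =>
      (τ ω : ℝ) * H (fun j => (∑ t ∈ Finset.Icc 1 (τ ω), μ t ω j) / (τ ω : ℝ))) P := by
    have hae : AEStronglyMeasurable (fun ω =>
        (τ ω : ℝ) * H (fun j => (∑ t ∈ Finset.Icc 1 (τ ω), μ t ω j) / (τ ω : ℝ))) P :=
      ((measurable_from_top (f := (Nat.cast : ℕ → ℝ))).comp hτm).aestronglyMeasurable.mul
        (hHm.comp_measurable hnubm).aestronglyMeasurable
    refine Integrable.mono' (integrable_const ((T:ℝ) * rbar)) hae
      (Filter.Eventually.of_forall fun ω => ?_)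
    rw [Real.norm_eq_abs, abs_mul]
    have h1 : |(τ ω : ℝ)| ≤ (T : ℝ) := by
      rw [abs_of_nonneg (le_of_lt (hτpos ω))]; exact_mod_cast hτT ω
    have h2 : |H (fun j => (∑ t ∈ Finset.Icc 1 (τ ω), μ t ω j) / (τ ω : ℝ))| ≤ rbar := by
      rw [abs_of_nonneg (hH_nonneg _)]; exact hH_le _
    exact mul_le_mul h1 h2 (abs_nonneg _) (Nat.cast_nonneg T)
  -- pointwise identity for the dual value at the averaged multiplier
  have hid2 : ∀ ω, (τ ω : ℝ) * Dbar (fun j => (∑ t ∈ Finset.Icc 1 (τ ω), μ t ω j) / (τ ω : ℝ))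
      = (τ ω : ℝ) * H (fun j => (∑ t ∈ Finset.Icc 1 (τ ω), μ t ω j) / (τ ω : ℝ))
        + ∑ t ∈ Finset.Icc 1 T, B t ω * (∑ j, μ t ω j * ρ j) := by
    intro ω
    rw [hDbar, hHeq _ (hnubpos ω), mul_add]
    congr 1
    rw [Finset.mul_sum]
    have he : ∀ j : Fin m, (τ ω:ℝ) * ((∑ t ∈ Finset.Icc 1 (τ ω), μ t ω j) / (τ ω : ℝ) * ρ j)
        = (∑ t ∈ Finset.Icc 1 (τ ω), μ t ω j) * ρ j := by
      intro j
      have hne : (τ ω : ℝ) ≠ 0 := ne_of_gt (hτpos ω)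
      field_simp
    rw [Finset.sum_congr rfl fun j _ => he j, ← hsum (fun t ω => ∑ j, μ t ω j * ρ j) ω]
    simp_rw [Finset.sum_mul]
    exact Finset.sum_comm
  have hPtf_int : Integrable (fun ω => ∑ t ∈ Finset.Icc 1 T, B t ω * (∑ j, μ t ω j * ρ j)) P := by
    have he : (fun ω => ∑ t ∈ Finset.Icc 1 T, B t ω * (∑ j, μ t ω j * ρ j))
        = fun ω => ((τ ω : ℝ) * Dbar (fun j => (∑ t ∈ Finset.Icc 1 (τ ω), μ t ω j) / (τ ω : ℝ)))
          - (τ ω : ℝ) * H (fun j => (∑ t ∈ Finset.Icc 1 (τ ω), μ t ω j) / (τ ω : ℝ)) := by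
      funext ω; rw [hid2 ω]; ring
    rw [he]
    exact hint2.sub hτHint
  -- Jensen
  have hid3 : ∀ ω, (τ ω : ℝ) * Dbar (fun j => (∑ t ∈ Finset.Icc 1 (τ ω), μ t ω j) / (τ ω : ℝ))
      ≤ (∑ t ∈ Finset.Icc 1 T, B t ω * H (μ t ω))
        + ∑ t ∈ Finset.Icc 1 T, B t ω * (∑ j, μ t ω j * ρ j) := by
    intro ω
    have hcard : (Finset.Icc 1 (τ ω)).card = τ ω := by rw [Nat.card_Icc]; omega
    have hw1 : ∑ _t ∈ Finset.Icc 1 (τ ω), ((τ ω : ℝ))⁻¹ = 1 := by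
      rw [Finset.sum_const, hcard, nsmul_eq_mul, mul_inv_cancel₀ (ne_of_gt (hτpos ω))]
    have hmem : ∀ t ∈ Finset.Icc 1 (τ ω), μ t ω ∈ {ν : Fin m → ℝ | ∀ j, 0 ≤ ν j} :=
      fun t _ j => hμpos t ω j
    have hjensen := hDconvex.map_sum_le (fun t _ => by positivity) hw1 hmem
    have hpt : (∑ t ∈ Finset.Icc 1 (τ ω), ((τ ω : ℝ))⁻¹ • μ t ω)
        = fun j => (∑ t ∈ Finset.Icc 1 (τ ω), μ t ω j) / (τ ω : ℝ) := by
      funext j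
      rw [Finset.sum_apply]
      simp only [Pi.smul_apply, smul_eq_mul]
      rw [div_eq_mul_inv, Finset.sum_mul]
      exact Finset.sum_congr rfl fun t _ => mul_comm _ _
    rw [hpt] at hjensen
    calc (τ ω:ℝ) * Dbar (fun j => (∑ t ∈ Finset.Icc 1 (τ ω), μ t ω j) / (τ ω : ℝ))
        ≤ (τ ω:ℝ) * ∑ t ∈ Finset.Icc 1 (τ ω), (τ ω:ℝ)⁻¹ * Dbar (μ t ω) :=
          mul_le_mul_of_nonneg_left hjensen (le_of_lt (hτpos ω))
      _ = ∑ t ∈ Finset.Icc 1 (τ ω), Dbar (μ t ω) := by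
          rw [Finset.mul_sum]
          refine Finset.sum_congr rfl fun t _ => ?_
          rw [← mul_assoc, mul_inv_cancel₀ (ne_of_gt (hτpos ω)), one_mul]
      _ = ∑ t ∈ Finset.Icc 1 (τ ω), (H (μ t ω) + ∑ j, μ t ω j * ρ j) := by
          refine Finset.sum_congr rfl fun t _ => ?_
          rw [hDbar, hHeq _ (fun j => hμpos t ω j)]
      _ = (∑ t ∈ Finset.Icc 1 (τ ω), H (μ t ω))
          + ∑ t ∈ Finset.Icc 1 (τ ω), ∑ j, μ t ω j * ρ j := Finset.sum_add_distrib
      _ = _ := by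
          rw [hsum (fun t ω => H (μ t ω)) ω, hsum (fun t ω => ∑ j, μ t ω j * ρ j) ω]
  -- a.e. primal decomposition
  have hgreedy' : ∀ᵐ ω ∂P, ∀ t : ℕ, 1 ≤ t → t ≤ T → (x t ω ∈ X (γ t ω) ∧
      r (γ t ω) (x t ω) - (∑ j, μ t ω j * g (γ t ω) (x t ω) j) = rstar (μ t ω) (γ t ω)) := by
    rw [ae_all_iff]
    intro t
    by_cases h : 1 ≤ t ∧ t ≤ T
    · exact (hgreedy t h.1 h.2).mono fun ω hω _ _ => hω
    · exact Filter.Eventually.of_forall fun ω h1 h2 => absurd ⟨h1, h2⟩ h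
  have hid1 : ∀ᵐ ω ∂P, (∑ t ∈ Finset.Icc 1 (τ ω), r (γ t ω) (x t ω))
      = (∑ t ∈ Finset.Icc 1 T, B t ω * rstar (μ t ω) (γ t ω))
        + (∑ t ∈ Finset.Icc 1 T, B t ω * (∑ j, μ t ω j * ρ j))
        - (∑ t ∈ Finset.Icc 1 (τ ω), ∑ j, μ t ω j * (ρ j - g (γ t ω) (x t ω) j)) := by
    refine hgreedy'.mono fun ω hω => ?_
    rw [← hsum (fun t ω => rstar (μ t ω) (γ t ω)) ω, ← hsum (fun t ω => ∑ j, μ t ω j * ρ j) ω]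
    rw [← Finset.sum_add_distrib, ← Finset.sum_sub_distrib]
    refine Finset.sum_congr rfl fun t ht => ?_
    obtain ⟨ht1, ht2⟩ := Finset.mem_Icc.mp ht
    obtain ⟨hxX, heq⟩ := hω t ht1 (le_trans ht2 (hτT ω))
    have hsplit : ∑ j, μ t ω j * (ρ j - g (γ t ω) (x t ω) j)
        = (∑ j, μ t ω j * ρ j) - ∑ j, μ t ω j * g (γ t ω) (x t ω) j := by
      rw [← Finset.sum_sub_distrib]
      exact Finset.sum_congr rfl fun j _ => by ring
    rw [hsplit]
    linarith
  -- put everything together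
  have hIR : ∫ ω, (∑ t ∈ Finset.Icc 1 T, B t ω * rstar (μ t ω) (γ t ω)) ∂P
      = ∫ ω, (∑ t ∈ Finset.Icc 1 T, B t ω * H (μ t ω)) ∂P := by
    rw [integral_finset_sum _ fun t ht =>
        hRint t (Finset.mem_Icc.mp ht).1 (Finset.mem_Icc.mp ht).2,
      integral_finset_sum _ fun t ht =>
        hKint t (Finset.mem_Icc.mp ht).1 (Finset.mem_Icc.mp ht).2]
    exact Finset.sum_congr rfl fun t ht =>
      hkey t (Finset.mem_Icc.mp ht).1 (Finset.mem_Icc.mp ht).2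
  have hIA : ∫ ω, (∑ t ∈ Finset.Icc 1 (τ ω), r (γ t ω) (x t ω)) ∂P
      = (∫ ω, (∑ t ∈ Finset.Icc 1 T, B t ω * rstar (μ t ω) (γ t ω)) ∂P)
        + (∫ ω, (∑ t ∈ Finset.Icc 1 T, B t ω * (∑ j, μ t ω j * ρ j)) ∂P)
        - ∫ ω, (∑ t ∈ Finset.Icc 1 (τ ω), ∑ j, μ t ω j * (ρ j - g (γ t ω) (x t ω) j)) ∂P := by
    have hsum_int : Integrable (fun ω =>
        (∑ t ∈ Finset.Icc 1 T, B t ω * rstar (μ t ω) (γ t ω))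
          + (∑ t ∈ Finset.Icc 1 T, B t ω * (∑ j, μ t ω j * ρ j))) P := hRf_int.add hPtf_int
    rw [integral_congr_ae hid1, integral_sub hsum_int hint3, integral_add hRf_int hPtf_int]
  have hID2 : ∫ ω, ((τ ω : ℝ) *
        Dbar (fun j => (∑ t ∈ Finset.Icc 1 (τ ω), μ t ω j) / (τ ω : ℝ))) ∂P
      ≤ (∫ ω, (∑ t ∈ Finset.Icc 1 T, B t ω * H (μ t ω)) ∂P)
        + ∫ ω, (∑ t ∈ Finset.Icc 1 T, B t ω * (∑ j, μ t ω j * ρ j)) ∂P := by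
    calc ∫ ω, ((τ ω : ℝ) *
          Dbar (fun j => (∑ t ∈ Finset.Icc 1 (τ ω), μ t ω j) / (τ ω : ℝ))) ∂P
        ≤ ∫ ω, ((∑ t ∈ Finset.Icc 1 T, B t ω * H (μ t ω))
            + ∑ t ∈ Finset.Icc 1 T, B t ω * (∑ j, μ t ω j * ρ j)) ∂P :=
          integral_mono hint2 (hKf_int.add hPtf_int) fun ω => hid3 ω
      _ = _ := integral_add hKf_int hPtf_int
  rw [ge_iff_le, hIA]
  linarith [hID2, hIR]
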